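/- Let R be a domain where reduction and t-reduction coincide for all nonzero ideals. If R is a Prüfer v-multiplication domain (every nonzero finitely generated ideal is t-invertible), then R is a Prüfer domain. -/
import Mathlib


open scoped nonZeroDivisors

/-- The `v`-operation (divisorial closure) on `R`-submodules of the fraction field `K`:
`I_v = (I⁻¹)⁻¹` where `I⁻¹ = (R : I) = 1 / I`. -/
noncomputable def vS (R K : Type*) [CommRing R] [Field K] [Algebra R K]
    (I : Submodule R K) : Submodule R K := 1 / (1 / I)

/-- The `t`-operation: `I_t = ⋃ J_v` where `J` ranges over nonzero finitely generated
sub-ideals of `I`. -/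
noncomputable def tS (R K : Type*) [CommRing R] [Field K] [Algebra R K]
    (I : Submodule R K) : Submodule R K :=
  ⨆ J ∈ {J : Submodule R K | J ≠ ⊥ ∧ J.FG ∧ J ≤ I}, vS R K J

/-- The image of an ideal of `R` in the fraction field `K`, as an `R`-submodule. -/
noncomputable def idealToSub (R K : Type*) [CommRing R] [Field K] [Algebra R K]
    (I : Ideal R) : Submodule R K := Submodule.map (Algebra.linearMap R K) I

/-- The `t`-closure of an ideal of `R`, computed in the fraction field `K`. -/
noncomputable def tI (R K : Type*) [CommRing R] [Field K] [Algebra R K]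
    (I : Ideal R) : Submodule R K := tS R K (idealToSub R K I)

/-- The `v`-closure of an ideal of `R`, computed in the fraction field `K`. -/
noncomputable def vI (R K : Type*) [CommRing R] [Field K] [Algebra R K]
    (I : Ideal R) : Submodule R K := vS R K (idealToSub R K I)

section Aux

variable (R K : Type*) [CommRing R] [Field K] [Algebra R K]

theorem tS_mono {I I' : Submodule R K} (h : I ≤ I') : tS R K I ≤ tS R K I' := by
  refine iSup₂_le fun J hJ => le_iSup₂_of_le J ⟨hJ.1, hJ.2.1, hJ.2.2.trans h⟩ le_rfl

theorem one_div_anti {A B : Submodule R K} (h : A ≤ B) : 1 / B ≤ 1 / A := by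
  intro x hx
  rw [Submodule.mem_div_iff_forall_mul_mem] at hx ⊢
  exact fun y hy => hx y (h hy)

theorem one_div_one_le : (1 / 1 : Submodule R K) ≤ 1 := by
  have := Submodule.mul_one_div_le_one (I := (1 : Submodule R K))
  rwa [one_mul] at this

theorem vS_le_one {J : Submodule R K} (hJ : J ≤ 1) : vS R K J ≤ 1 := by
  have h1 : (1 : Submodule R K) ≤ 1 / J := Submodule.one_le_one_div.mpr hJ
  exact (one_div_anti R K h1).trans (one_div_one_le R K)

theorem tS_le_one {I : Submodule R K} (hI : I ≤ 1) : tS R K I ≤ 1 :=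
  iSup₂_le fun _ hJ => vS_le_one R K (hJ.2.2.trans hI)

theorem tS_one [Nontrivial K] : tS R K (1 : Submodule R K) = 1 := by
  refine le_antisymm (tS_le_one R K le_rfl) ?_
  have hbot : (1 : Submodule R K) ≠ ⊥ := by
    rw [Submodule.one_eq_span]
    exact (Submodule.span_singleton_eq_bot).not.mpr one_ne_zero
  have hfg : (1 : Submodule R K).FG :=
    ⟨{1}, by rw [Finset.coe_singleton]; exact (Submodule.one_eq_span).symm⟩
  refine le_iSup₂_of_le 1 ⟨hbot, hfg, le_rfl⟩ ?_
  show (1 : Submodule R K) ≤ 1 / (1 / 1)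
  rw [Submodule.le_div_iff_mul_le, one_mul]
  exact one_div_one_le R K

theorem idealToSub_top : idealToSub R K (⊤ : Ideal R) = 1 := by
  unfold idealToSub
  rw [Submodule.map_top, Submodule.one_eq_range]

theorem idealToSub_le_one (I : Ideal R) : idealToSub R K I ≤ 1 := by
  rw [← idealToSub_top R K]
  exact Submodule.map_mono le_top

end Aux

/-- If reduction and `t`-reduction coincide for all nonzero ideals of the domain `R` and `R`
is a PvMD (every nonzero finitely generated ideal is `t`-invertible), then `R` is a Prüfer
domain (every nonzero finitely generated ideal is invertible). -/
theorem pruefer_of_pvmd_of_reduction_eq_tReduction (R Q : Type*) [CommRing R] [IsDomain R]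
    [Field Q] [Algebra R Q] [IsFractionRing R Q]
    (hcoincide : ∀ J I : Ideal R, J ≠ 0 → I ≠ 0 → J ≤ I →
      ((∃ n : ℕ, tI R Q (J * I ^ n) = tI R Q (I ^ (n + 1))) ↔
        (∃ n : ℕ, J * I ^ n = I ^ (n + 1))))
    (hpvmd : ∀ I : Ideal R, I ≠ 0 → I.FG →
      tS R Q (idealToSub R Q I * (1 / idealToSub R Q I)) = 1) :
    ∀ I : Ideal R, I ≠ 0 → I.FG → idealToSub R Q I * (1 / idealToSub R Q I) = 1 := by

  intro I hI0 hIfg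
  by_contra hA
  set T := idealToSub R Q I with hT
  set A := T * (1 / T) with hAdef
  have hTle1 : T ≤ 1 := idealToSub_le_one R Q I
  have hAle1 : A ≤ 1 := Submodule.mul_one_div_le_one
  have hinj : Function.Injective (Algebra.linearMap R Q) := IsFractionRing.injective R Q
  set A' : Ideal R := A.comap (Algebra.linearMap R Q) with hA'
  have hmapA : idealToSub R Q A' = A := by
    unfold idealToSub
    rw [Submodule.map_comap_eq]
    rw [Submodule.one_eq_range] at hAle1
    exact inf_eq_right.mpr hAle1
  have hA'top : A' ≠ ⊤ := by
    intro h
    apply hA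
    rw [← hmapA, h, idealToSub_top]
  have hTbot : T ≠ ⊥ := by
    intro h
    apply hI0
    apply Submodule.map_injective_of_injective hinj
    rw [Submodule.zero_eq_bot, Submodule.map_bot]
    exact h
  have hAbot : A ≠ ⊥ := by
    intro h
    exact hTbot (le_bot_iff.mp (h ▸ Submodule.le_self_mul_one_div hTle1))
  have hA'0 : A' ≠ 0 := by
    intro h
    apply hAbot
    rw [← hmapA, h]
    exact Submodule.map_bot _
  obtain ⟨M, hMmax, hA'M⟩ := Ideal.exists_le_maximal A' hA'top
  have hM0 : M ≠ 0 := by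
    intro h
    apply hA'0
    rw [Submodule.zero_eq_bot, ← le_bot_iff, ← Submodule.zero_eq_bot]
    exact h ▸ hA'M
  have htA : tS R Q A = 1 := hpvmd I hI0 hIfg
  have htM : tI R Q M = 1 := by
    refine le_antisymm (tS_le_one R Q (idealToSub_le_one R Q M)) ?_
    calc (1 : Submodule R Q) = tS R Q A := htA.symm
      _ = tI R Q A' := by rw [tI, hmapA]
      _ ≤ tI R Q M := tS_mono R Q (Submodule.map_mono hA'M)
  have htop : tI R Q (⊤ : Ideal R) = 1 := by
    rw [tI, idealToSub_top]
    exact tS_one R Q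
  have hex : ∃ n : ℕ, tI R Q (M * (⊤ : Ideal R) ^ n) = tI R Q ((⊤ : Ideal R) ^ (n + 1)) :=
    ⟨0, by rw [pow_zero, mul_one, pow_one, htM, htop]⟩
  obtain ⟨n, hn⟩ := (hcoincide M ⊤ hM0 (by simp) le_top).mp hex
  rw [Ideal.top_pow, Ideal.top_pow, Ideal.mul_top] at hn
  exact hMmax.ne_top hn
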